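/- Let α ∈ (0,1) and let ν = (1+α)^{-1}(δ₀ + α δ₁), where δ₀ and δ₁ are the Dirac measures at 0 and 1. Then ν is admissible and Λ(ν) = ℕ \ {0}, i.e., for t > 0, the function exp(tψ) (ψ the second characteristic of ν) is the characteristic function of a probability measure if and only if t is a positive integer. -/

import Mathlib

open MeasureTheory

/-- The characteristic function of a measure `μ` on `ℝ`:
`μ̂ y = ∫ x, exp (i y x) ∂μ`. -/
noncomputable def charFunMeas (μ : Measure ℝ) (y : ℝ) : ℂ :=
  ∫ x, Complex.exp (Complex.I * (y * x)) ∂μ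

/-- `Λ(μ)` for an admissible probability measure with second characteristic `ψ`. -/
def lambdaSet (ψ : ℝ → ℂ) : Set ℝ :=
  {t : ℝ | 0 < t ∧ ∃ ν' : Measure ℝ, IsProbabilityMeasure ν' ∧
    ∀ y : ℝ, charFunMeas ν' y = Complex.exp (t * ψ y)}

open Complex Real

lemma integrable_char (μ : Measure ℝ) [IsFiniteMeasure μ] (y : ℝ) :
    Integrable (fun x : ℝ => Complex.exp (Complex.I * (y * x))) μ := by
  have hc : Continuous fun x : ℝ => Complex.exp (Complex.I * (y * x)) := by fun_prop
  refine (integrable_const (1 : ℝ)).mono' hc.aestronglyMeasurable (ae_of_all _ fun x => ?_)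
  simp [Complex.norm_exp]

lemma charFun_nu (α : ℝ) (hα : α ∈ Set.Ioo (0 : ℝ) 1)
    (ν : Measure ℝ)
    (hν : ν = (ENNReal.ofReal (1 + α))⁻¹ •
      (Measure.dirac (0 : ℝ) + ENNReal.ofReal α • Measure.dirac (1 : ℝ))) (y : ℝ) :
    charFunMeas ν y = (((1 + α)⁻¹ : ℝ) : ℂ) * (1 + α * Complex.exp (Complex.I * y)) := by
  obtain ⟨h0, h1⟩ := hα
  have h1α : (0:ℝ) < 1 + α := by linarith
  unfold charFunMeas
  rw [hν, integral_smul_measure, integral_add_measure (integrable_char _ y)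
    ((integrable_char _ y).smul_measure (by simp)), integral_smul_measure,
    integral_dirac, integral_dirac]
  simp only [ENNReal.toReal_inv, ENNReal.toReal_ofReal h1α.le, ENNReal.toReal_ofReal h0.le]
  push_cast
  ring_nf
  simp [Complex.exp_zero]
  ring


lemma mem_slit (α : ℝ) (hα : α ∈ Set.Ioo (0:ℝ) 1) (y : ℝ) :
    (1 + (α:ℂ) * Complex.exp (Complex.I * y)) ∈ Complex.slitPlane := by
  left
  have habs : ‖(α:ℂ) * Complex.exp (Complex.I * y)‖ = α := by
    simp [Complex.norm_exp, abs_of_pos hα.1]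
  have hre : |((α:ℂ) * Complex.exp (Complex.I * y)).re| ≤ α := by
    calc |((α:ℂ) * Complex.exp (Complex.I * y)).re| ≤ ‖_‖ := Complex.abs_re_le_norm _
    _ = α := habs
  have := abs_le.1 hre
  simp only [Complex.add_re, Complex.one_re]
  linarith [hα.2]

lemma ne_zero_slit (α : ℝ) (hα : α ∈ Set.Ioo (0:ℝ) 1) (y : ℝ) :
    (1 + (α:ℂ) * Complex.exp (Complex.I * y)) ≠ 0 :=
  Complex.slitPlane_ne_zero (mem_slit α hα y)

lemma log_unique (f g : ℝ → ℂ) (hf : Continuous f) (hg : Continuous g)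
    (h0 : f 0 = g 0) (hexp : ∀ y, Complex.exp (f y) = Complex.exp (g y)) :
    f = g := by
  have key : IsClopen {y : ℝ | f y = g y} := by
    constructor
    · exact isClosed_eq hf hg
    · rw [isOpen_iff_mem_nhds]
      intro y hy
      have hyv : f y - g y = 0 := sub_eq_zero.2 hy
      have htend : Filter.Tendsto (fun z => ‖f z - g z‖) (nhds y)
          (nhds 0) := by
        have := (continuous_norm.comp (hf.sub hg)).continuousAt (x := y)
        simpa [ContinuousAt, Function.comp_def, Pi.sub_apply, hyv] using this
      have hev : ∀ᶠ z in nhds y, ‖f z - g z‖ < 2 * Real.pi :=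
        htend.eventually_lt_const (by positivity)
      filter_upwards [hev] with z hz
      have hz2 : Complex.exp (f z - g z) = 1 := by
        rw [Complex.exp_sub, hexp z, div_self (Complex.exp_ne_zero _)]
      obtain ⟨n, hn⟩ := Complex.exp_eq_one_iff.1 hz2
      have habs : ‖f z - g z‖ = |(n:ℝ)| * (2 * Real.pi) := by
        rw [hn]
        rw [norm_mul, norm_mul, norm_mul, Complex.norm_I, Complex.norm_intCast,
          Complex.norm_real, Real.norm_eq_abs, Complex.norm_two, _root_.abs_of_nonneg Real.pi_pos.le]
        push_cast
        ring
      rw [habs] at hz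
      have hn0 : n = 0 := by
        by_contra h
        have : (1:ℝ) ≤ |(n:ℝ)| := by
          rw [← Int.cast_abs]; exact_mod_cast Int.one_le_abs (by omega)
        nlinarith [Real.pi_pos]
      rw [hn0] at hn
      simp at hn
      exact sub_eq_zero.1 hn
  have h2 : {y : ℝ | f y = g y} = Set.univ := key.eq_univ ⟨0, h0⟩
  funext y
  exact (Set.eq_univ_iff_forall.1 h2) y

lemma psi_eq (α : ℝ) (hα : α ∈ Set.Ioo (0:ℝ) 1)
    (ν : Measure ℝ)
    (hcf : ∀ y : ℝ, charFunMeas ν y = (((1 + α)⁻¹ : ℝ) : ℂ) * (1 + α * Complex.exp (Complex.I * y)))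
    (ψ : ℝ → ℂ) (hψc : Continuous ψ) (hψ0 : ψ 0 = 0)
    (hψ : ∀ y : ℝ, charFunMeas ν y = Complex.exp (ψ y)) :
    ∀ y, ψ y = Complex.log (1 + α * Complex.exp (Complex.I * y)) - Real.log (1 + α) := by
  have h1α : (0:ℝ) < 1 + α := by linarith [hα.1]
  set g : ℝ → ℂ := fun y => Complex.log (1 + α * Complex.exp (Complex.I * y)) - Real.log (1 + α)
    with hgdef
  have hgc : Continuous g := by
    apply Continuous.sub _ continuous_const
    exact Continuous.clog (by fun_prop) (fun y => mem_slit α hα y)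
  have hg0 : g 0 = 0 := by
    simp only [hgdef]
    rw [show (1 : ℂ) + (α:ℂ) * Complex.exp (Complex.I * (0:ℝ)) = ((1 + α : ℝ) : ℂ) by
      push_cast; simp [Complex.exp_zero]]
    rw [← Complex.ofReal_log h1α.le]
    ring
  have hexp : ∀ y, Complex.exp (ψ y) = Complex.exp (g y) := by
    intro y
    rw [← hψ y, hcf y]
    rw [Complex.exp_sub, Complex.exp_log (ne_zero_slit α hα y)]
    rw [show Complex.exp ((Real.log (1+α) : ℝ) : ℂ) = ((1 + α : ℝ) : ℂ) by
      rw [← Complex.ofReal_exp, Real.exp_log h1α]]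
    rw [div_eq_inv_mul]
    push_cast
    ring
  have := log_unique ψ g hψc hgc (by rw [hψ0, hg0]) hexp
  exact fun y => congrFun this y


noncomputable def bc (t α : ℝ) (n : ℕ) : ℝ :=
  (∏ i ∈ Finset.range n, (t - i)) * α ^ n / n.factorial

lemma bc_zero (t α : ℝ) : bc t α 0 = 1 := by simp [bc]

lemma bc_succ (t α : ℝ) (n : ℕ) :
    bc t α (n + 1) * (n + 1) = bc t α n * (α * (t - n)) := by
  simp only [bc, Finset.prod_range_succ, Nat.factorial_succ]
  field_simp
  push_cast
  ring

lemma abs_bc_succ (t α : ℝ) (hα : 0 < α) (n : ℕ) (hn : t ≤ n) :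
    |bc t α (n + 1)| * (n+1) = α * (n - t) * |bc t α n| := by
  have h1 : bc t α (n+1) * (n+1) = bc t α n * (α * (t - n)) := bc_succ t α n
  have h2 : |bc t α (n+1) * (n+1)| = |bc t α n * (α * (t - n))| := by rw [h1]
  rw [abs_mul, abs_mul, abs_mul] at h2
  rw [_root_.abs_of_nonneg (by positivity : (0:ℝ) ≤ (n:ℝ)+1), abs_of_pos hα,
    abs_of_nonpos (by linarith : t - (n:ℝ) ≤ 0)] at h2
  rw [h2]; ring

lemma summable_abs_bc (t α : ℝ) (ht : 0 < t) (hα : α ∈ Set.Ioo (0:ℝ) 1) :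
    Summable (fun n : ℕ => |bc t α n|) := by
  set r : ℝ := (1 + α)/2 with hr
  apply summable_of_ratio_norm_eventually_le (by rw [hr]; linarith [hα.2] : r < 1)
  filter_upwards [Filter.eventually_ge_atTop ⌈t⌉₊] with n hn
  have hn' : t ≤ n := le_trans (Nat.le_ceil t) (by exact_mod_cast hn)
  have key := abs_bc_succ t α hα.1 n hn'
  have hpos : (0:ℝ) < (n:ℝ) + 1 := by positivity
  rw [Real.norm_eq_abs, Real.norm_eq_abs, _root_.abs_abs, _root_.abs_abs]
  have h1 : |bc t α (n+1)| = α * ((n:ℝ) - t) * |bc t α n| / ((n:ℝ)+1) := by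
    field_simp at key ⊢; linarith
  rw [h1]
  rw [div_le_iff₀ hpos]
  have hα1 : α ≤ r := by rw [hr]; linarith [hα.2]
  have : α * ((n:ℝ) - t) ≤ r * ((n:ℝ)+1) := by
    have h2 : α * ((n:ℝ) - t) ≤ α * ((n:ℝ)+1) := by
      apply mul_le_mul_of_nonneg_left (by linarith) hα.1.le
    have h3 : α * ((n:ℝ)+1) ≤ r * ((n:ℝ)+1) := by
      apply mul_le_mul_of_nonneg_right hα1 hpos.le
    linarith
  nlinarith [abs_nonneg (bc t α n)]

lemma summable_mul_abs_bc (t α : ℝ) (ht : 0 < t) (hα : α ∈ Set.Ioo (0:ℝ) 1) :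
    Summable (fun n : ℕ => (n:ℝ) * |bc t α n|) := by
  set r : ℝ := (1 + α)/2 with hr
  apply summable_of_ratio_norm_eventually_le (by rw [hr]; linarith [hα.2] : r < 1)
  filter_upwards [Filter.eventually_ge_atTop ⌈t⌉₊] with n hn
  have hn' : t ≤ n := le_trans (Nat.le_ceil t) (by exact_mod_cast hn)
  have key := abs_bc_succ t α hα.1 n hn'
  rw [Real.norm_eq_abs, Real.norm_eq_abs]
  push_cast
  rw [_root_.abs_of_nonneg (by positivity : (0:ℝ) ≤ ((n:ℝ)+1) * |bc t α (n+1)|),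
    _root_.abs_of_nonneg (by positivity : (0:ℝ) ≤ (n:ℝ) * |bc t α n|)]
  have hα1 : α ≤ r := by rw [hr]; linarith [hα.2]
  calc ((n:ℝ)+1) * |bc t α (n+1)| = α * ((n:ℝ) - t) * |bc t α n| := by linarith [key]
  _ ≤ r * ((n:ℝ) * |bc t α n|) := by
      have e1 : α * ((n:ℝ) - t) ≤ α * (n:ℝ) := by nlinarith [hα.1]
      have e2 : α * (n:ℝ) ≤ r * (n:ℝ) :=
        mul_le_mul_of_nonneg_right hα1 (Nat.cast_nonneg n)
      calc α * ((n:ℝ) - t) * |bc t α n| ≤ (r * (n:ℝ)) * |bc t α n| :=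
            mul_le_mul_of_nonneg_right (le_trans e1 e2) (abs_nonneg _)
      _ = r * ((n:ℝ) * |bc t α n|) := by ring


noncomputable def Ffun (t α : ℝ) (y : ℝ) : ℂ :=
  ∑' n : ℕ, (bc t α n : ℂ) * Complex.exp (Complex.I * n * y)

lemma norm_term (c : ℝ) (n : ℕ) (y : ℝ) :
    ‖(c : ℂ) * Complex.exp (Complex.I * n * y)‖ = |c| := by
  rw [norm_mul, Complex.norm_exp]
  simp [Complex.norm_real]

lemma summable_term (t α : ℝ) (ht : 0 < t) (hα : α ∈ Set.Ioo (0:ℝ) 1) (y : ℝ) :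
    Summable (fun n : ℕ => (bc t α n : ℂ) * Complex.exp (Complex.I * n * y)) := by
  apply Summable.of_norm
  simpa only [norm_term] using summable_abs_bc t α ht hα

lemma term_hasDerivAt (c : ℝ) (n : ℕ) (y : ℝ) :
    HasDerivAt (fun y : ℝ => (c : ℂ) * Complex.exp (Complex.I * n * y))
      ((c : ℂ) * (Complex.I * n * Complex.exp (Complex.I * n * y))) y := by
  have h1 : HasDerivAt (fun z : ℂ => Complex.I * n * z) (Complex.I * n) (y:ℂ) := by
    simpa using (hasDerivAt_id (y:ℂ)).const_mul (Complex.I * n)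
  have h2 := (Complex.hasDerivAt_exp (Complex.I * n * y)).comp (y:ℂ) h1
  have h3 := h2.comp_ofReal
  have h4 := h3.const_mul (c : ℂ)
  exact h4.congr_deriv (by ring)

lemma Ffun_hasDerivAt (t α : ℝ) (ht : 0 < t) (hα : α ∈ Set.Ioo (0:ℝ) 1) (y : ℝ) :
    HasDerivAt (Ffun t α)
      (∑' n : ℕ, (bc t α n : ℂ) * (Complex.I * n * Complex.exp (Complex.I * n * y))) y := by
  apply hasDerivAt_tsum (u := fun n : ℕ => (n:ℝ) * |bc t α n|)
    (summable_mul_abs_bc t α ht hα) (fun n y => term_hasDerivAt _ n y) _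
    (summable_term t α ht hα 0) y
  intro n y
  rw [norm_mul, norm_mul, norm_mul, Complex.norm_exp]
  simp [Complex.norm_real]
  ring_nf
  rfl

lemma key_identity (t α : ℝ) (ht : 0 < t) (hα : α ∈ Set.Ioo (0:ℝ) 1) (y : ℝ) :
    (1 + (α:ℂ) * Complex.exp (Complex.I * y)) *
      (∑' n : ℕ, (bc t α n : ℂ) * (Complex.I * n * Complex.exp (Complex.I * n * y)))
    = Complex.I * t * α * Complex.exp (Complex.I * y) * Ffun t α y := by
  set e : ℕ → ℂ := fun n => Complex.exp (Complex.I * n * y) with he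
  have hee : ∀ n : ℕ, e (n+1) = Complex.exp (Complex.I * y) * e n := by
    intro n
    rw [he]
    simp only [← Complex.exp_add]
    congr 1
    push_cast
    ring
  set a : ℕ → ℂ := fun n => (bc t α n : ℂ) * (Complex.I * n * e n) with ha
  have hsa : Summable a := by
    apply Summable.of_norm
    have : ∀ n, ‖a n‖ = (n:ℝ) * |bc t α n| := by
      intro n
      rw [ha]
      simp only [norm_mul, Complex.norm_exp]
      simp [Complex.norm_real, he, Complex.norm_exp]
      ring
    simpa only [this] using summable_mul_abs_bc t α ht hα
  have hsb : Summable (fun n => (α:ℂ) * Complex.exp (Complex.I * y) * a n) :=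
    hsa.mul_left _
  -- LHS = ∑ a n + α e^{iy} ∑ a n
  have lhs_eq : (1 + (α:ℂ) * Complex.exp (Complex.I * y)) * (∑' n, a n)
      = (∑' n, a (n+1)) + ∑' n, ((α:ℂ) * Complex.exp (Complex.I * y) * a n) := by
    rw [add_mul, one_mul, tsum_mul_left]
    congr 1
    rw [Summable.tsum_eq_zero_add hsa]
    simp [ha]
  rw [lhs_eq, ← Summable.tsum_add ((summable_nat_add_iff 1).2 hsa) hsb]
  rw [show Complex.I * t * α * Complex.exp (Complex.I * y) * Ffun t α y
      = ∑' n, (Complex.I * t * α * Complex.exp (Complex.I * y)) *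
          ((bc t α n : ℂ) * e n) by rw [Ffun, tsum_mul_left]]
  apply tsum_congr
  intro n
  have hrec : ((bc t α (n+1) : ℝ) : ℂ) * ((n:ℂ) + 1) = (bc t α n : ℂ) * ((α:ℂ) * ((t:ℂ) - n)) := by
    have := bc_succ t α n
    push_cast
    exact_mod_cast congrArg (fun x : ℝ => (x : ℂ)) this
  rw [ha]
  simp only [hee n]
  push_cast
  calc (bc t α (n+1) : ℂ) * (Complex.I * ((n:ℂ)+1) * (Complex.exp (Complex.I * y) * e n))
        + (α:ℂ) * Complex.exp (Complex.I * y) * ((bc t α n : ℂ) * (Complex.I * n * e n))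
      = Complex.I * Complex.exp (Complex.I * y) * e n *
          ((bc t α (n+1) : ℂ) * ((n:ℂ)+1) + (α:ℂ) * (n:ℂ) * (bc t α n : ℂ)) := by ring
    _ = Complex.I * Complex.exp (Complex.I * y) * e n * ((bc t α n : ℂ) * (α:ℂ) * (t:ℂ)) := by
        rw [hrec]; ring
    _ = Complex.I * (t:ℂ) * (α:ℂ) * Complex.exp (Complex.I * y) * ((bc t α n : ℂ) * e n) := by
        ring

lemma Ffun_eq (t α : ℝ) (ht : 0 < t) (hα : α ∈ Set.Ioo (0:ℝ) 1) (y : ℝ) :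
    Ffun t α y = Ffun t α 0 *
      Complex.exp ((t:ℂ) * (Complex.log (1 + α * Complex.exp (Complex.I * y))
        - Real.log (1 + α))) := by
  have h1α : (0:ℝ) < 1 + α := by linarith [hα.1]
  set H : ℝ → ℂ := fun y => Ffun t α y *
    Complex.exp (-(t:ℂ) * Complex.log (1 + α * Complex.exp (Complex.I * y))) with hH
  have hderiv : ∀ z : ℝ, HasDerivAt H 0 z := by
    intro z
    have hF := Ffun_hasDerivAt t α ht hα z
    have hinner : HasDerivAt (fun y : ℝ => 1 + (α:ℂ) * Complex.exp (Complex.I * y))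
        ((α:ℂ) * (Complex.I * Complex.exp (Complex.I * z))) z := by
      have h1 : HasDerivAt (fun w : ℂ => Complex.I * w) Complex.I (z:ℂ) := by
        simpa using (hasDerivAt_id (z:ℂ)).const_mul Complex.I
      have h2 := ((Complex.hasDerivAt_exp (Complex.I * z)).comp (z:ℂ) h1).comp_ofReal
      have h3 := (h2.const_mul ((α:ℂ))).const_add 1
      exact h3.congr_deriv (by ring)
    have hlog := hinner.clog_real (mem_slit α hα z)
    have hexp2 := (hlog.const_mul (-(t:ℂ))).cexp
    have hprod := hF.mul hexp2
    refine hprod.congr_deriv ?_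
    rw [eq_comm]
    set D := (1 : ℂ) + (α:ℂ) * Complex.exp (Complex.I * z)
    have hD : D ≠ 0 := ne_zero_slit α hα z
    have hkey := key_identity t α ht hα z
    set S' := ∑' n : ℕ, (bc t α n : ℂ) * (Complex.I * n * Complex.exp (Complex.I * n * z))
    set E := Complex.exp (-(t:ℂ) * Complex.log D)
    -- goal : S' * E + F * (E * (-(t) * (α*(I*exp)/D))) = 0
    have hfield : S' * E + Ffun t α z * (E * (-(t:ℂ) *
        ((α:ℂ) * (Complex.I * Complex.exp (Complex.I * z)) / D)))
        = E / D * (D * S' - Complex.I * t * α * Complex.exp (Complex.I * z) * Ffun t α z) := by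
      field_simp
      ring
    rw [hfield, hkey]
    simp
  have hconst : ∀ x : ℝ, H x = H 0 := by
    intro x
    exact is_const_of_deriv_eq_zero (fun z => (hderiv z).differentiableAt)
      (fun z => (hderiv z).deriv) x 0
  have hx := hconst y
  rw [hH] at hx
  simp only at hx
  have h0 : (1 : ℂ) + (α:ℂ) * Complex.exp (Complex.I * (0:ℝ)) = ((1 + α : ℝ) : ℂ) := by
    push_cast; simp [Complex.exp_zero]
  have hlog0 : Complex.log (1 + (α:ℂ) * Complex.exp (Complex.I * (0:ℝ)))
      = ((Real.log (1 + α) : ℝ) : ℂ) := by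
    rw [h0, ← Complex.ofReal_log h1α.le]
  -- hx : F y * exp(-t log(1+αe^{iy})) = F 0 * exp(-t log(1+α))
  have := congrArg (fun w => w * Complex.exp ((t:ℂ) *
    Complex.log (1 + α * Complex.exp (Complex.I * y)))) hx
  rw [mul_assoc, mul_assoc, ← Complex.exp_add, ← Complex.exp_add] at this
  rw [show -(t:ℂ) * Complex.log (1 + α * Complex.exp (Complex.I * y)) +
      (t:ℂ) * Complex.log (1 + α * Complex.exp (Complex.I * y)) = 0 by ring,
    Complex.exp_zero, mul_one] at this
  rw [this, hlog0]
  congr 1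
  ring


-- negativity of bc at ⌊t⌋+2 for non-integer t
lemma bc_neg (t α : ℝ) (ht : 0 < t) (hα : 0 < α) (htn : ∀ n : ℕ, t ≠ n) :
    bc t α (⌊t⌋₊ + 2) < 0 := by
  set m := ⌊t⌋₊ with hm
  have hmt : (m:ℝ) < t := lt_of_le_of_ne (Nat.floor_le ht.le) (fun h => htn m h.symm)
  have htm1 : t < (m:ℝ) + 1 := Nat.lt_floor_add_one t
  have hprod : (∏ i ∈ Finset.range (m + 2), (t - i)) < 0 := by
    rw [Finset.prod_range_succ]
    have hpos : (0:ℝ) < ∏ i ∈ Finset.range (m + 1), (t - i) := by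
      apply Finset.prod_pos
      intro i hi
      have : i ≤ m := Nat.lt_succ_iff.1 (Finset.mem_range.1 hi)
      have : (i:ℝ) ≤ m := by exact_mod_cast this
      linarith
    have hneg : t - ((m:ℝ) + 1) < 0 := by linarith
    push_cast
    exact mul_neg_of_pos_of_neg hpos hneg
  rw [bc]
  apply div_neg_of_neg_of_pos
  · exact mul_neg_of_neg_of_pos hprod (by positivity)
  · exact_mod_cast Nat.factorial_pos (m+2)

-- integral of exp(I m y) over Ioc 0 2π, complex exponent difference of naturals
lemma integral_exp_int (n k : ℕ) :
    ∫ y in Set.Ioc (0:ℝ) (2*Real.pi), Complex.exp (Complex.I * ((n:ℂ) - (k:ℂ)) * y)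
      = if n = k then ((2*Real.pi : ℝ) : ℂ) else 0 := by
  have h2π : (0:ℝ) ≤ 2*Real.pi := by positivity
  rw [← intervalIntegral.integral_of_le h2π]
  by_cases h : n = k
  · subst h
    simp
  · have hc : Complex.I * ((n:ℂ) - (k:ℂ)) ≠ 0 := by
      simp [Complex.I_ne_zero, sub_eq_zero]
      exact_mod_cast fun hh => h (by exact_mod_cast hh)
    rw [show (fun y : ℝ => Complex.exp (Complex.I * ((n:ℂ) - (k:ℂ)) * y)) =
        (fun y : ℝ => Complex.exp ((Complex.I * ((n:ℂ) - (k:ℂ))) * y)) by rfl]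
    rw [integral_exp_mul_complex hc]
    have : Complex.exp (Complex.I * ((n:ℂ) - (k:ℂ)) * (2*Real.pi : ℝ)) = 1 := by
      have := Complex.exp_int_mul_two_pi_mul_I ((n:ℤ) - (k:ℤ))
      rw [← this]
      congr 1
      push_cast
      ring
    rw [this]
    simp [h]

-- Fourier coefficient of Ffun
lemma integral_Ffun (t α : ℝ) (ht : 0 < t) (hα : α ∈ Set.Ioo (0:ℝ) 1) (k : ℕ) :
    ∫ y in Set.Ioc (0:ℝ) (2*Real.pi),
        Complex.exp (-(Complex.I) * k * y) * Ffun t α y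
      = ((2*Real.pi : ℝ) : ℂ) * bc t α k := by
  have h2π : (0:ℝ) ≤ 2*Real.pi := by positivity
  have hrw : ∀ y : ℝ, Complex.exp (-(Complex.I) * k * y) * Ffun t α y
      = ∑' n : ℕ, (bc t α n : ℂ) * Complex.exp (Complex.I * ((n:ℂ) - (k:ℂ)) * y) := by
    intro y
    rw [Ffun, ← tsum_mul_left]
    apply tsum_congr
    intro n
    calc Complex.exp (-(Complex.I) * k * y) * ((bc t α n : ℂ) * Complex.exp (Complex.I * n * y))
        = (bc t α n : ℂ) * (Complex.exp (Complex.I * n * y) * Complex.exp (-(Complex.I) * k * y)) := by ring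
      _ = (bc t α n : ℂ) * Complex.exp (Complex.I * ((n:ℂ) - (k:ℂ)) * y) := by
          rw [← Complex.exp_add]; congr 1; ring
  simp only [hrw]
  rw [MeasureTheory.integral_tsum]
  · have : ∀ n : ℕ, ∫ y in Set.Ioc (0:ℝ) (2*Real.pi),
        (bc t α n : ℂ) * Complex.exp (Complex.I * ((n:ℂ) - (k:ℂ)) * y)
        = (bc t α n : ℂ) * (if n = k then ((2*Real.pi : ℝ) : ℂ) else 0) := by
      intro n
      rw [MeasureTheory.integral_const_mul, integral_exp_int n k]
    simp only [this]
    rw [tsum_eq_single k]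
    · simp; ring
    · intro n hn
      simp [hn]
  · intro n
    apply Continuous.aestronglyMeasurable
    fun_prop
  · apply ne_of_lt
    have hnorm : ∀ (n : ℕ) (y : ℝ),
        ‖(bc t α n : ℂ) * Complex.exp (Complex.I * ((n:ℂ) - (k:ℂ)) * y)‖₊ = ‖bc t α n‖₊ := by
      intro n y
      ext
      push_cast
      rw [norm_mul, Complex.norm_exp]
      simp [Complex.norm_real]
    calc ∑' n : ℕ, ∫⁻ y in Set.Ioc (0:ℝ) (2*Real.pi),
          ‖(bc t α n : ℂ) * Complex.exp (Complex.I * ((n:ℂ) - (k:ℂ)) * y)‖₊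
        = ∑' n : ℕ, (‖bc t α n‖₊ : ENNReal) * ENNReal.ofReal (2*Real.pi) := by
          apply tsum_congr
          intro n
          simp only [hnorm]
          rw [MeasureTheory.lintegral_const]
          simp [Real.volume_Ioc]
      _ = (∑' n : ℕ, (‖bc t α n‖₊ : ENNReal)) * ENNReal.ofReal (2*Real.pi) :=
          ENNReal.tsum_mul_right
      _ < ⊤ := by
          apply ENNReal.mul_lt_top _ ENNReal.ofReal_lt_top
          rw [lt_top_iff_ne_top, ENNReal.tsum_coe_ne_top_iff_summable]
          apply NNReal.summable_coe.1
          simpa [coe_nnnorm, Real.norm_eq_abs] using summable_abs_bc t α ht hα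


set_option maxHeartbeats 1000000 in
lemma ae_cos_one (ν' : Measure ℝ) [IsProbabilityMeasure ν'] (c : ℝ)
    (h : charFunMeas ν' c = 1) :
    ∀ᵐ x ∂ν', Real.cos (c * x) = 1 := by
  have hint : Integrable (fun x : ℝ => Complex.exp (Complex.I * (c * x))) ν' :=
    integrable_char ν' c
  have hre : ∫ x, Real.cos (c*x) ∂ν' = 1 := by
    have h1 : ∫ x, Complex.reCLM (Complex.exp (Complex.I * (c * x))) ∂ν'
        = Complex.reCLM (∫ x, Complex.exp (Complex.I * (c * x)) ∂ν') :=
      Complex.reCLM.integral_comp_comm hint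
    rw [charFunMeas] at h
    rw [h] at h1
    simp only [Complex.reCLM_apply, Complex.one_re] at h1
    rw [← h1]
    apply integral_congr_ae
    apply ae_of_all
    intro x
    simp only
    rw [show Complex.I * ((c:ℂ) * (x:ℂ)) = ((c*x : ℝ) : ℂ) * Complex.I by
      push_cast; ring]
    rw [Complex.exp_ofReal_mul_I_re]
  have hnn : 0 ≤ᵐ[ν'] fun x => 1 - Real.cos (c*x) := by
    apply ae_of_all
    intro x
    simp [Real.cos_le_one]
  have hintc : Integrable (fun x : ℝ => Real.cos (c*x)) ν' := by
    have hc2 : Continuous fun x : ℝ => Real.cos (c*x) := by fun_prop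
    refine (integrable_const (1 : ℝ)).mono' hc2.aestronglyMeasurable (ae_of_all _ fun x => ?_)
    simp [Real.abs_cos_le_one]
  have hint2 : Integrable (fun x => 1 - Real.cos (c*x)) ν' :=
    (integrable_const 1).sub hintc
  have hzero : ∫ x, (1 - Real.cos (c*x)) ∂ν' = 0 := by
    rw [integral_sub (integrable_const 1) hintc]
    simp [hre]
  rw [MeasureTheory.integral_eq_zero_iff_of_nonneg_ae hnn hint2] at hzero
  filter_upwards [hzero] with x hx
  have : (1:ℝ) - Real.cos (c*x) = 0 := hx
  linarith

lemma ae_int (ν' : Measure ℝ) [IsProbabilityMeasure ν'] (h : charFunMeas ν' (2*Real.pi) = 1) :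
    ∀ᵐ x ∂ν', ∃ n : ℤ, x = (n : ℝ) := by
  filter_upwards [ae_cos_one ν' (2*Real.pi) h] with x hx
  obtain ⟨n, hn⟩ := (Real.cos_eq_one_iff _).1 hx
  refine ⟨n, ?_⟩
  have hπ : (0:ℝ) < 2*Real.pi := by positivity
  nlinarith [hn]


lemma integral_exp_int' (m : ℤ) :
    ∫ y in Set.Ioc (0:ℝ) (2*Real.pi), Complex.exp (Complex.I * (m:ℂ) * y)
      = if m = 0 then ((2*Real.pi : ℝ) : ℂ) else 0 := by
  have h2π : (0:ℝ) ≤ 2*Real.pi := by positivity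
  rw [← intervalIntegral.integral_of_le h2π]
  by_cases h : m = 0
  · subst h; simp
  · have hc : Complex.I * (m:ℂ) ≠ 0 := by
      simp [Complex.I_ne_zero, sub_eq_zero]
      exact_mod_cast h
    rw [show (fun y : ℝ => Complex.exp (Complex.I * (m:ℂ) * y)) =
        (fun y : ℝ => Complex.exp ((Complex.I * (m:ℂ)) * y)) by rfl]
    rw [integral_exp_mul_complex hc]
    have h1 : Complex.exp (Complex.I * (m:ℂ) * ((2*Real.pi : ℝ) : ℂ)) = 1 := by
      rw [← Complex.exp_int_mul_two_pi_mul_I m]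
      congr 1
      push_cast
      ring
    rw [show Complex.I * (m:ℂ) * ((2*Real.pi:ℝ):ℂ) = Complex.I * (m:ℂ) * (2*Real.pi:ℝ) by norm_num] at h1
    rw [h1]
    simp [h]

lemma fourier_charFun (ν' : Measure ℝ) [IsProbabilityMeasure ν']
    (hae : ∀ᵐ x ∂ν', ∃ n : ℤ, x = (n : ℝ)) (k : ℕ) :
    ∫ y in Set.Ioc (0:ℝ) (2*Real.pi),
        Complex.exp (-(Complex.I) * k * y) * charFunMeas ν' y
      = (((ν' {(k:ℝ)}).toReal : ℝ) : ℂ) * ((2*Real.pi : ℝ) : ℂ) := by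
  have h2π : (0:ℝ) ≤ 2*Real.pi := by positivity
  haveI : IsFiniteMeasure (volume.restrict (Set.Ioc (0:ℝ) (2*Real.pi))) := by
    constructor
    rw [Measure.restrict_apply_univ]
    rw [Real.volume_Ioc]; exact ENNReal.ofReal_lt_top
  set f : ℝ → ℝ → ℂ := fun y x => Complex.exp (Complex.I * ((x:ℂ) - (k:ℂ)) * y) with hf
  have hstep1 : ∀ y : ℝ, Complex.exp (-(Complex.I) * k * y) * charFunMeas ν' y
      = ∫ x, f y x ∂ν' := by
    intro y
    rw [charFunMeas, ← MeasureTheory.integral_const_mul]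
    apply integral_congr_ae
    apply ae_of_all
    intro x
    simp only [hf]
    rw [← Complex.exp_add]
    congr 1
    push_cast
    ring
  simp only [hstep1]
  have hInt : Integrable (Function.uncurry f)
      ((volume.restrict (Set.Ioc (0:ℝ) (2*Real.pi))).prod ν') := by
    have hc : Continuous (Function.uncurry f) := by
      simp only [hf, Function.uncurry]
      fun_prop
    refine (integrable_const (1 : ℝ)).mono' hc.aestronglyMeasurable (ae_of_all _ fun p => ?_)
    simp only [hf, Function.uncurry]
    rw [Complex.norm_exp]
    simp
  rw [MeasureTheory.integral_integral_swap hInt]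
  have hinner : ∀ᵐ x ∂ν', (∫ y in Set.Ioc (0:ℝ) (2*Real.pi), f y x)
      = Set.indicator {(k:ℝ)} (fun _ => ((2*Real.pi : ℝ) : ℂ)) x := by
    filter_upwards [hae] with x hx
    obtain ⟨n, rfl⟩ := hx
    have hcast : ∀ y : ℝ, f y (n:ℝ) = Complex.exp (Complex.I * ((n - (k:ℤ) : ℤ):ℂ) * y) := by
      intro y
      simp only [hf]
      congr 2
      push_cast
      ring
    simp only [hcast]
    rw [integral_exp_int' (n - (k:ℤ))]
    by_cases h : n = (k:ℤ)
    · subst h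
      simp
    · rw [if_neg (by omega)]
      rw [Set.indicator_of_notMem]
      simp only [Set.mem_singleton_iff]
      exact_mod_cast fun hh => h (by exact_mod_cast hh)
  rw [integral_congr_ae hinner]
  rw [MeasureTheory.integral_indicator_const _ (measurableSet_singleton _)]
  simp [mul_comm, measureReal_def]


noncomputable def binMeas (α : ℝ) (n : ℕ) : Measure ℝ :=
  ∑ k ∈ Finset.range (n+1),
    (ENNReal.ofReal ((n.choose k) * α^k / (1+α)^n)) • Measure.dirac ((k : ℕ) : ℝ)

lemma binMeas_prob (α : ℝ) (hα : α ∈ Set.Ioo (0:ℝ) 1) (n : ℕ) :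
    IsProbabilityMeasure (binMeas α n) := by
  have h1α : (0:ℝ) < 1 + α := by linarith [hα.1]
  constructor
  rw [binMeas]
  rw [Measure.finset_sum_apply]
  simp only [Measure.smul_apply, Measure.dirac_apply_of_mem (Set.mem_univ _), smul_eq_mul, mul_one]
  rw [← ENNReal.ofReal_sum_of_nonneg (fun k _ => div_nonneg (mul_nonneg (Nat.cast_nonneg _) (pow_nonneg hα.1.le k)) (pow_nonneg h1α.le n))]
  rw [show ∑ k ∈ Finset.range (n+1), ((n.choose k) * α^k / (1+α)^n) = 1 by
    rw [← Finset.sum_div]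
    rw [div_eq_one_iff_eq (by positivity)]
    rw [show ((1:ℝ) + α)^n = (α + 1)^n by ring_nf]
    rw [add_pow]
    apply Finset.sum_congr rfl
    intro k hk
    ring]
  simp

lemma integrable_smul_dirac (f : ℝ → ℂ) (hf : Measurable f) (a : ℝ) (c : ENNReal) (hc : c ≠ ⊤) :
    Integrable f (c • Measure.dirac a) := by
  have h1 : Integrable f (Measure.dirac a) := by
    apply (integrable_const (f a)).congr
    rw [Filter.EventuallyEq, ae_dirac_eq]
    simp
  exact h1.smul_measure hc

lemma charFun_binMeas (α : ℝ) (hα : α ∈ Set.Ioo (0:ℝ) 1) (n : ℕ) (y : ℝ) :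
    charFunMeas (binMeas α n) y
      = ((((1+α)⁻¹ : ℝ) : ℂ) * (1 + (α:ℂ) * Complex.exp (Complex.I * y)))^n := by
  have h1α : (0:ℝ) < 1 + α := by linarith [hα.1]
  rw [charFunMeas, binMeas]
  rw [MeasureTheory.integral_finset_sum_measure (fun k _ =>
    integrable_smul_dirac _ (by fun_prop) _ _ (by simp))]
  have hterm : ∀ k ∈ Finset.range (n+1),
      (∫ x, Complex.exp (Complex.I * (y * x))
        ∂((ENNReal.ofReal ((n.choose k) * α^k / (1+α)^n)) • Measure.dirac ((k:ℕ):ℝ)))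
      = (((n.choose k : ℝ) * α^k / (1+α)^n : ℝ) : ℂ) * Complex.exp (Complex.I * y)^k := by
    intro k hk
    rw [integral_smul_measure, integral_dirac,
      ENNReal.toReal_ofReal (div_nonneg (mul_nonneg (Nat.cast_nonneg _)
        (pow_nonneg hα.1.le k)) (pow_nonneg h1α.le n)), real_smul,
      ← Complex.exp_nat_mul]
    congr 2
    push_cast
    ring
  rw [Finset.sum_congr rfl hterm]
  have hexp : ∀ k, (((n.choose k : ℝ) * α^k / (1+α)^n : ℝ) : ℂ)
      = ((((1+α) : ℝ)⁻¹ : ℝ) : ℂ)^n * ((α:ℂ)^k * (n.choose k : ℂ)) := by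
    intro k
    push_cast
    rw [div_eq_mul_inv, ← Complex.ofReal_pow]
    push_cast [← inv_pow]
    ring
  calc ∑ k ∈ Finset.range (n+1), (((n.choose k : ℝ) * α^k / (1+α)^n : ℝ) : ℂ) *
        Complex.exp (Complex.I * y)^k
      = ((((1+α) : ℝ)⁻¹ : ℝ) : ℂ)^n * ∑ k ∈ Finset.range (n+1),
          ((α:ℂ) * Complex.exp (Complex.I * y))^k * 1^(n-k) * (n.choose k : ℂ) := by
        rw [Finset.mul_sum]
        apply Finset.sum_congr rfl
        intro k hk
        rw [hexp k]
        ring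
    _ = ((((1+α) : ℝ)⁻¹ : ℝ) : ℂ)^n * ((α:ℂ) * Complex.exp (Complex.I * y) + 1)^n := by
        rw [← add_pow]
    _ = (((((1+α) : ℝ)⁻¹ : ℝ) : ℂ) * (1 + (α:ℂ) * Complex.exp (Complex.I * y)))^n := by
        rw [mul_pow]
        ring_nf


/-- For `ν = (1+α)⁻¹ (δ₀ + α δ₁)` with `α ∈ (0,1)`, the measure `ν` is admissible
and minimally divisible: `Λ(ν) = ℕ \ {0}`. -/
theorem stmt_11 (α : ℝ) (hα : α ∈ Set.Ioo (0 : ℝ) 1)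
    (ν : Measure ℝ)
    (hν : ν = (ENNReal.ofReal (1 + α))⁻¹ •
      (Measure.dirac (0 : ℝ) + ENNReal.ofReal α • Measure.dirac (1 : ℝ))) :
    (∀ y : ℝ, charFunMeas ν y ≠ 0) ∧
      ∀ ψ : ℝ → ℂ, Continuous ψ → ψ 0 = 0 →
        (∀ y : ℝ, charFunMeas ν y = Complex.exp (ψ y)) →
        lambdaSet ψ = {t : ℝ | ∃ n : ℕ, 0 < n ∧ t = (n : ℝ)} := by
  have h1α : (0:ℝ) < 1 + α := by linarith [hα.1]
  have hcf := charFun_nu α hα ν hν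
  constructor
  · intro y
    rw [hcf y]
    exact mul_ne_zero (by exact_mod_cast (inv_ne_zero (by linarith : (1:ℝ)+α ≠ 0)))
      (ne_zero_slit α hα y)
  · intro ψ hψc hψ0 hψ
    have hψeq := psi_eq α hα ν hcf ψ hψc hψ0 hψ
    ext t
    simp only [lambdaSet, Set.mem_setOf_eq]
    constructor
    · rintro ⟨ht, ν', hν'prob, hν'⟩
      by_contra hcon
      push_neg at hcon
      have htn : ∀ n : ℕ, t ≠ (n:ℝ) := by
        intro n htn
        rcases Nat.eq_zero_or_pos n with h0 | hpos
        · rw [h0] at htn; simp at htn; linarith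
        · exact hcon n hpos htn
      -- charFunMeas ν' (2π) = 1
      have hexp2π : Complex.exp (Complex.I * ((2*Real.pi : ℝ) : ℂ)) = 1 := by
        rw [← Complex.exp_two_pi_mul_I]
        congr 1
        push_cast
        ring
      have hψ2π : ψ (2*Real.pi) = 0 := by
        rw [hψeq (2*Real.pi), hexp2π]
        rw [show (1:ℂ) + (α:ℂ) * 1 = ((1 + α : ℝ) : ℂ) by push_cast; ring]
        rw [← Complex.ofReal_log h1α.le]
        ring
      have h2π1 : charFunMeas ν' (2*Real.pi) = 1 := by
        rw [hν' (2*Real.pi), hψ2π]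
        simp
      have hae := ae_int ν' h2π1
      -- Ffun relation
      have hFy : ∀ y, Ffun t α y = Ffun t α 0 * charFunMeas ν' y := by
        intro y
        rw [hν' y, hψeq y, Ffun_eq t α ht hα y]
      -- Fourier coefficients
      have hIk : ∀ k : ℕ, ((2*Real.pi : ℝ) : ℂ) * bc t α k
          = Ffun t α 0 * ((((ν' {(k:ℝ)}).toReal : ℝ) : ℂ) * ((2*Real.pi : ℝ) : ℂ)) := by
        intro k
        rw [← integral_Ffun t α ht hα k, ← fourier_charFun ν' hae k,
          ← MeasureTheory.integral_const_mul]
        apply integral_congr_ae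
        apply ae_of_all
        intro y
        simp only
        rw [hFy y]
        ring
      -- F0 is real
      have hsum : Summable (fun n : ℕ => bc t α n) :=
        (summable_abs_bc t α ht hα).of_abs  -- check name
      have hF0 : Ffun t α 0 = (((∑' n : ℕ, bc t α n) : ℝ) : ℂ) := by
        rw [Ffun, Complex.ofReal_tsum]
        apply tsum_congr
        intro n
        norm_num
      set S : ℝ := ∑' n : ℕ, bc t α n with hS
      have hreal : ∀ k : ℕ, bc t α k = S * (ν' {(k:ℝ)}).toReal := by
        intro k
        have h := hIk k
        rw [hF0] at h
        have h2 : ((2*Real.pi : ℝ) : ℂ) * (bc t α k)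
            = ((2*Real.pi : ℝ) : ℂ) * ((S * (ν' {(k:ℝ)}).toReal : ℝ) : ℂ) := by
          rw [h]; push_cast; ring
        have h3 := mul_left_cancel₀ (by
          simpa using (by positivity : (2*Real.pi : ℝ) ≠ 0) : ((2*Real.pi:ℝ):ℂ) ≠ 0) h2
        exact_mod_cast h3
      have hS0 : 0 < S := by
        have h0 := hreal 0
        rw [bc_zero] at h0
        nlinarith [ENNReal.toReal_nonneg (a := ν' {((0:ℕ):ℝ)})]
      have hneg := bc_neg t α ht hα.1 htn
      have hk := hreal (⌊t⌋₊ + 2)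
      nlinarith [ENNReal.toReal_nonneg (a := ν' {((⌊t⌋₊ + 2 : ℕ):ℝ)})]
    · rintro ⟨n, hn, rfl⟩
      refine ⟨by exact_mod_cast hn, binMeas α n, binMeas_prob α hα n, ?_⟩
      intro y
      rw [charFun_binMeas α hα n y, ← hcf y, hψ y, ← Complex.exp_nat_mul]
      norm_cast
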